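/- Let f : ℕ → ℂ and let z ∈ ℂ be such that the series ∑_{n≥0} |f_n| |z|^n converges. Then ∑_{n≥0} f_n z^n / n! = (1/(2π)) ∫_{-π}^{π} F(z e^{-i t}) e^{e^{i t}} dt, where F(w) = ∑_{n≥0} f_n w^n. -/

import Mathlib

open MeasureTheory intervalIntegral

lemma exp_tsum_div (w : ℂ) : Complex.exp w = ∑' n : ℕ, w ^ n / n.factorial := by
  rw [Complex.exp_eq_exp_ℂ, NormedSpace.exp_eq_tsum_div]

lemma orth (k : ℤ) :
    (∫ t in (-Real.pi)..Real.pi, Complex.exp (Complex.I * k * t)) =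
      if k = 0 then ((2 * Real.pi : ℝ) : ℂ) else 0 := by
  by_cases hk : k = 0
  · simp [hk, two_mul, Complex.ofReal_add]
  · rw [if_neg hk]
    have hc : (Complex.I * k : ℂ) ≠ 0 := by
      simp [Complex.I_ne_zero, hk]
    rw [integral_exp_mul_complex hc]
    have h1 : Complex.exp (Complex.I * k * (Real.pi : ℂ)) = (-1 : ℂ) ^ k := by
      rw [show (Complex.I * k * (Real.pi : ℂ)) = k * ((Real.pi : ℂ) * Complex.I) by ring,
        Complex.exp_int_mul, Complex.exp_pi_mul_I]
    have h2 : Complex.exp (Complex.I * k * ((-Real.pi : ℝ) : ℂ)) = (-1 : ℂ) ^ k := by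
      push_cast
      rw [show (Complex.I * k * (-(Real.pi : ℂ))) = (-k : ℤ) * ((Real.pi : ℂ) * Complex.I) by
        push_cast; ring, Complex.exp_int_mul, Complex.exp_pi_mul_I, zpow_neg]
      exact inv_eq_of_mul_eq_one_right (by rw [← mul_zpow]; norm_num)
    rw [h1, h2, sub_self, zero_div]

lemma fact_inv_summable : Summable fun m : ℕ => ((m.factorial : ℝ))⁻¹ := by
  simpa using Real.summable_pow_div_factorial 1

lemma inner_integral (n : ℕ) :
    (∫ t in (-Real.pi)..Real.pi,
        Complex.exp (-(Complex.I * (t : ℂ)) * n) * Complex.exp (Complex.exp (Complex.I * (t : ℂ)))) =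
      ((2 * Real.pi : ℝ) : ℂ) / n.factorial := by
  set G : ℕ → C(ℝ, ℂ) := fun m =>
    ⟨fun t : ℝ => Complex.exp (-(Complex.I * (t : ℂ)) * n) * (Complex.exp (Complex.I * (t : ℂ)) ^ m / m.factorial),
      by fun_prop⟩ with hG
  have hnorm : ∀ (m : ℕ) (t : ℝ), ‖G m t‖ = (m.factorial : ℝ)⁻¹ := by
    intro m t
    simp only [hG, ContinuousMap.coe_mk, norm_mul, norm_div, norm_pow,
      Complex.norm_exp]
    simp [Complex.norm_natCast, div_eq_mul_inv, mul_comm]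
  haveI : Nonempty (Set.uIcc (-Real.pi) Real.pi) := Set.nonempty_uIcc.to_subtype
  have hGsum : Summable fun m : ℕ =>
      ‖(G m).restrict (⟨Set.uIcc (-Real.pi) Real.pi, isCompact_uIcc⟩ : TopologicalSpace.Compacts ℝ)‖ := by
    refine fact_inv_summable.of_nonneg_of_le (fun m => norm_nonneg _) fun m => ?_
    rw [ContinuousMap.norm_le _ (by positivity)]
    rintro ⟨x, hx⟩
    exact le_of_eq (hnorm m x)
  have key := tsum_intervalIntegral_eq_of_summable_norm (a := -Real.pi) (b := Real.pi) hGsum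
  have h1 : (∫ t in (-Real.pi)..Real.pi,
        Complex.exp (-(Complex.I * (t : ℂ)) * n) * Complex.exp (Complex.exp (Complex.I * (t : ℂ)))) =
      ∫ t in (-Real.pi)..Real.pi, ∑' m : ℕ, G m t := by
    refine intervalIntegral.integral_congr fun t _ => ?_
    simp only [hG, ContinuousMap.coe_mk]
    rw [exp_tsum_div (Complex.exp (Complex.I * (t : ℂ))), ← tsum_mul_left]
  have hpt : ∀ (m : ℕ) (t : ℝ),
      G m t = Complex.exp (Complex.I * (((m : ℤ) - (n : ℤ) : ℤ) : ℂ) * t) / m.factorial := by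
    intro m t
    simp only [hG, ContinuousMap.coe_mk]
    rw [← Complex.exp_nat_mul, ← mul_div_assoc, ← Complex.exp_add]
    congr 2
    push_cast
    ring
  have h2 : ∀ m : ℕ, (∫ t in (-Real.pi)..Real.pi, G m t) =
      (if m = n then ((2 * Real.pi : ℝ) : ℂ) else 0) / m.factorial := by
    intro m
    rw [intervalIntegral.integral_congr (fun t _ => hpt m t), intervalIntegral.integral_div,
      orth ((m : ℤ) - (n : ℤ))]
    congr 1
    simp [sub_eq_zero]
  rw [h1, ← key]
  rw [tsum_eq_single n (fun m hm => by rw [h2 m]; simp [hm]), h2 n]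
  simp

/-- OGF-to-EGF integral formula II: if `∑ ‖f n‖ ‖z‖^n` converges, then
`∑_{n≥0} f_n z^n / n! = (1/(2π)) ∫_{-π}^{π} F(z e^{-it}) e^{e^{it}} dt`,
where `F(w) = ∑_{n≥0} f_n w^n`. -/
theorem ogf_to_egf_integral_formula_II (f : ℕ → ℂ) (z : ℂ)
    (hsum : Summable (fun n : ℕ => ‖f n‖ * ‖z‖ ^ n)) :
    ∑' n : ℕ, f n * z ^ n / n.factorial =
      ((2 * Real.pi : ℝ) : ℂ)⁻¹ *
        ∫ t in (-Real.pi)..Real.pi,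
          (∑' n : ℕ, f n * (z * Complex.exp (-(Complex.I * (t : ℂ)))) ^ n) *
            Complex.exp (Complex.exp (Complex.I * (t : ℂ))) := by
  set H : ℕ → C(ℝ, ℂ) := fun n =>
    ⟨fun t : ℝ => f n * (z * Complex.exp (-(Complex.I * (t : ℂ)))) ^ n *
        Complex.exp (Complex.exp (Complex.I * (t : ℂ))), by fun_prop⟩ with hH
  have hHle : ∀ (n : ℕ) (t : ℝ), ‖H n t‖ ≤ ‖f n‖ * ‖z‖ ^ n * Real.exp 1 := by
    intro n t
    have h1 : ‖Complex.exp (-(Complex.I * (t : ℂ)))‖ = 1 := by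
      rw [Complex.norm_exp]; simp
    have h3 : ‖z * Complex.exp (-(Complex.I * (t : ℂ)))‖ = ‖z‖ := by
      rw [norm_mul, h1, mul_one]
    have h2 : ‖Complex.exp (Complex.exp (Complex.I * (t : ℂ)))‖ ≤ Real.exp 1 := by
      rw [Complex.norm_exp]
      apply Real.exp_le_exp.2
      calc (Complex.exp (Complex.I * (t : ℂ))).re
          ≤ |(Complex.exp (Complex.I * (t : ℂ))).re| := le_abs_self _
        _ ≤ ‖Complex.exp (Complex.I * (t : ℂ))‖ := Complex.abs_re_le_norm _
        _ = 1 := by rw [Complex.norm_exp]; simp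
    simp only [hH, ContinuousMap.coe_mk, norm_mul, norm_pow, h3]
    gcongr
  haveI : Nonempty (Set.uIcc (-Real.pi) Real.pi) := Set.nonempty_uIcc.to_subtype
  have hHsum : Summable fun n : ℕ =>
      ‖(H n).restrict (⟨Set.uIcc (-Real.pi) Real.pi, isCompact_uIcc⟩ : TopologicalSpace.Compacts ℝ)‖ := by
    refine (hsum.mul_right (Real.exp 1)).of_nonneg_of_le (fun n => norm_nonneg _) fun n => ?_
    rw [ContinuousMap.norm_le _ (by positivity)]
    rintro ⟨x, hx⟩
    exact hHle n x
  have key := tsum_intervalIntegral_eq_of_summable_norm (a := -Real.pi) (b := Real.pi) hHsum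
  have h1 : (∫ t in (-Real.pi)..Real.pi,
        (∑' n : ℕ, f n * (z * Complex.exp (-(Complex.I * (t : ℂ)))) ^ n) *
          Complex.exp (Complex.exp (Complex.I * (t : ℂ)))) =
      ∫ t in (-Real.pi)..Real.pi, ∑' n : ℕ, H n t := by
    refine intervalIntegral.integral_congr fun t _ => ?_
    simp only [hH, ContinuousMap.coe_mk]
    rw [tsum_mul_right]
  have hHint : ∀ n : ℕ, (∫ t in (-Real.pi)..Real.pi, H n t) =
      f n * z ^ n * (((2 * Real.pi : ℝ) : ℂ) / n.factorial) := by
    intro n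
    have hpt : ∀ t : ℝ, H n t = (f n * z ^ n) *
        (Complex.exp (-(Complex.I * (t : ℂ)) * n) *
          Complex.exp (Complex.exp (Complex.I * (t : ℂ)))) := by
      intro t
      simp only [hH, ContinuousMap.coe_mk]
      rw [mul_pow, ← Complex.exp_nat_mul, mul_comm ((n : ℂ))]
      ring
    rw [intervalIntegral.integral_congr fun t _ => hpt t,
      intervalIntegral.integral_const_mul, inner_integral n]
  rw [h1, ← key, tsum_congr hHint, ← tsum_mul_left]
  refine tsum_congr fun n => ?_
  have h2pi : ((2 * Real.pi : ℝ) : ℂ) ≠ 0 := by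
    simp [Real.pi_ne_zero]
  have hfact : ((n.factorial : ℂ)) ≠ 0 := by
    exact_mod_cast Nat.cast_ne_zero.2 n.factorial_ne_zero
  have hpi : ((Real.pi : ℝ) : ℂ) ≠ 0 := Complex.ofReal_ne_zero.2 Real.pi_ne_zero
  field_simp
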